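/- Assume f : ℂ × ℂ^m × ℂ → ℂ satisfies the Sibuya hypotheses (i)–(iii). Let ℓ = 2s − 1 be an odd integer with 1 ≤ ℓ ≤ m−1 (s a positive integer) and let a ∈ ℂ^m. Then a complex number λ is an eigenvalue of H_ℓ with coefficient vector a if and only if W_{−s,s}(a,λ) = 0. -/

import Mathlib

open Complex Real Filter Set

noncomputable section

/-- `Ppoly m a z = a₁ z^(m-1) + a₂ z^(m-2) + ⋯ + a_m`. -/
def Ppoly (m : ℕ) (a : Fin m → ℂ) (z : ℂ) : ℂ :=
  ∑ i : Fin m, a i * z ^ (m - 1 - (i : ℕ))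

/-- The potential `V_a(z) = (-1)^ℓ (iz)^m - P(iz)`. -/
def Vpot (m ℓ : ℕ) (a : Fin m → ℂ) (z : ℂ) : ℂ :=
  (-1) ^ ℓ * (Complex.I * z) ^ m - Ppoly m a (Complex.I * z)

/-- `u` is an eigenfunction of `H_ℓ` (coefficient vector `a`) with eigenvalue `lam`:
a nonconstant entire solution of `-u'' + V_a u = lam·u` decaying along the two rays
`arg z = -π/2 ± (ℓ+1)π/(m+2)`. -/
def IsEigenfunction (m ℓ : ℕ) (a : Fin m → ℂ) (lam : ℂ) (u : ℂ → ℂ) : Prop :=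
  Differentiable ℂ u ∧ (∃ z w : ℂ, u z ≠ u w) ∧
  (∀ z : ℂ, -(deriv (deriv u) z) + Vpot m ℓ a z * u z = lam * u z) ∧
  Tendsto (fun r : ℝ => u (r * Complex.exp ((-(π/2) + (ℓ+1)*π/(m+2) : ℝ) * Complex.I)))
    atTop (nhds 0) ∧
  Tendsto (fun r : ℝ => u (r * Complex.exp ((-(π/2) - (ℓ+1)*π/(m+2) : ℝ) * Complex.I)))
    atTop (nhds 0)

/-- `lam` is an eigenvalue of `H_ℓ` with coefficient vector `a`. -/
def IsEigenvalue (m ℓ : ℕ) (a : Fin m → ℂ) (lam : ℂ) : Prop :=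
  ∃ u : ℂ → ℂ, IsEigenfunction m ℓ a lam u

/-- An admissible enumeration `(lam n)_{n ≥ N0}` of the eigenvalues of `H_ℓ`:
each `lam n` is an eigenvalue, the map is injective, moduli are nondecreasing, and
all but finitely many eigenvalues occur among the `lam n`. -/
def AdmissibleEnum (m ℓ : ℕ) (a : Fin m → ℂ) (N0 : ℤ) (lam : ℤ → ℂ) : Prop :=
  (∀ n : ℤ, N0 ≤ n → IsEigenvalue m ℓ a (lam n)) ∧
  (∀ n₁ n₂ : ℤ, N0 ≤ n₁ → N0 ≤ n₂ → lam n₁ = lam n₂ → n₁ = n₂) ∧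
  (∀ n : ℤ, N0 ≤ n → ‖lam n‖ ≤ ‖lam (n+1)‖) ∧
  {μ : ℂ | IsEigenvalue m ℓ a μ ∧ ∀ n : ℤ, N0 ≤ n → lam n ≠ μ}.Finite

/-- The polynomial `a₁ z + a₂ z² + ⋯ + a_m z^m`; its `j`-th coefficient (after taking a
`k`-th power) is the coefficient of `z^{-j}` in `(a₁/z + ⋯ + a_m/z^m)^k`. -/
def Qa (m : ℕ) (a : Fin m → ℂ) : Polynomial ℂ :=
  ∑ i : Fin m, Polynomial.C (a i) * Polynomial.X ^ ((i : ℕ) + 1)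

/-- The generalized binomial coefficient `Binom(1/2, k)`. -/
def halfChoose (k : ℕ) : ℂ :=
  (∏ i ∈ Finset.range k, ((1:ℂ)/2 - (i : ℂ))) / (Nat.factorial k : ℂ)

/-- `b_{j,k}(a)`: the coefficient of `z^{-j}` in `Binom(1/2,k)·(a₁/z + ⋯ + a_m/z^m)^k`. -/
def bjk (m : ℕ) (a : Fin m → ℂ) (j k : ℕ) : ℂ :=
  halfChoose k * (Qa m a ^ k).coeff j

/-- `b_j(a) = ∑_{k=0}^j b_{j,k}(a)`. -/
def bcoef (m : ℕ) (a : Fin m → ℂ) (j : ℕ) : ℂ :=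
  ∑ k ∈ Finset.range (j+1), bjk m a j k

/-- `ω = exp(2πi/(m+2))`. -/
def omegaC (m : ℕ) : ℂ := Complex.exp (2 * (π : ℂ) * Complex.I / ((m : ℂ) + 2))

/-- `r_m(a) = -m/4` for odd `m`, `-m/4 - b_{m/2+1}(a)` for even `m`. -/
def rmExp (m : ℕ) (a : Fin m → ℂ) : ℂ :=
  if Even m then -(m:ℂ)/4 - bcoef m a (m/2+1) else -(m:ℂ)/4

/-- `F(z,a) = (2/(m+2)) z^{(m+2)/2} + ∑_{1 ≤ j < m/2+1} (2/(m+2-2j)) b_j(a) z^{(m+2-2j)/2}`,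
principal branches (`1 ≤ j < m/2+1 ↔ 1 ≤ j ≤ (m+1)/2` in ℕ). -/
def Fsib (m : ℕ) (a : Fin m → ℂ) (z : ℂ) : ℂ :=
  (2/((m:ℂ)+2)) * z ^ (((m:ℂ)+2)/2)
    + ∑ j ∈ Finset.Icc 1 ((m+1)/2),
        (2/((m:ℂ)+2-2*(j:ℂ))) * bcoef m a j * z ^ (((m:ℂ)+2-2*(j:ℂ))/2)

/-- The Sibuya hypotheses (i)–(iii) on `f : ℂ × ℂ^m × ℂ → ℂ`. -/
def SibuyaHyp (m : ℕ) (f : ℂ → (Fin m → ℂ) → ℂ → ℂ) : Prop :=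
  Differentiable ℂ (fun p : ℂ × (Fin m → ℂ) × ℂ => f p.1 p.2.1 p.2.2) ∧
  (∀ (a : Fin m → ℂ) (lam z : ℂ),
      deriv (deriv (fun w => f w a lam)) z = (z^m + Ppoly m a z + lam) * f z a lam) ∧
  (∀ ε : ℝ, 0 < ε → ∀ K : Set ((Fin m → ℂ) × ℂ), IsCompact K →
    ∃ C : ℝ, 0 < C ∧ ∃ R : ℝ, 0 < R ∧ ∀ p ∈ K, ∀ z : ℂ, R ≤ ‖z‖ →
      |Complex.arg z| ≤ 3*π/(m+2) - ε →
      ∃ E E' : ℂ,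
        ‖E‖ ≤ C * ‖z‖ ^ (-(1:ℝ)/2) ∧
        ‖E'‖ ≤ C * ‖z‖ ^ (-(1:ℝ)/2) ∧
        f z p.1 p.2 = z ^ (rmExp m p.1) * (1 + E) * Complex.exp (-(Fsib m p.1 z)) ∧
        deriv (fun w => f w p.1 p.2) z
          = -(z ^ (rmExp m p.1 + (m:ℂ)/2)) * (1 + E') * Complex.exp (-(Fsib m p.1 z)))

/-- `G^k(a)` for integer `k`: the `j`-th entry (`j = i+1`) is `ω^{(m+2-j)k} a_j`. -/
def Gint (m : ℕ) (k : ℤ) (a : Fin m → ℂ) : Fin m → ℂ :=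
  fun i => omegaC m ^ (((m + 1 - (i : ℕ) : ℕ) : ℤ) * k) * a i

/-- `f_k(z,a,λ) = f(ω^{-k} z, G^k(a), ω^{2k} λ)`. -/
def fks (m : ℕ) (f : ℂ → (Fin m → ℂ) → ℂ → ℂ) (k : ℤ) (a : Fin m → ℂ) (lam : ℂ) (z : ℂ) : ℂ :=
  f (omegaC m ^ (-k) * z) (Gint m k a) (omegaC m ^ (2*k) * lam)

/-- The Wronskian `W_{j,k}(a,λ) = f_j ∂_z f_k - ∂_z f_j · f_k`, evaluated at `z = 0`
(it is independent of `z`). -/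
def Wjk (m : ℕ) (f : ℂ → (Fin m → ℂ) → ℂ → ℂ) (j k : ℤ) (a : Fin m → ℂ) (lam : ℂ) : ℂ :=
  fks m f j a lam 0 * deriv (fks m f k a lam) 0 - deriv (fks m f j a lam) 0 * fks m f k a lam 0


namespace SibuyaProof


lemma entire_deriv {g : ℂ → ℂ} (hg : Differentiable ℂ g) : Differentiable ℂ (deriv g) := by
  have h : AnalyticOnNhd ℂ g univ := fun z _ => hg.analyticAt z
  exact fun z => (h.deriv z trivial).differentiableAt

/-- Uniqueness for the second order linear ODE `g'' = Q g` with zero initial data. -/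
lemma ode_unique {Q g : ℂ → ℂ} (hQ : Continuous Q) (hg : Differentiable ℂ g)
    (hode : ∀ z, deriv (deriv g) z = Q z * g z)
    (z₀ : ℂ) (h0 : g z₀ = 0) (h1 : deriv g z₀ = 0) : ∀ z, g z = 0 := by
  have hg' : Differentiable ℂ (deriv g) := entire_deriv hg
  intro z₁
  set d : ℂ := z₁ - z₀ with hd
  set p : ℝ → ℂ := fun t => z₀ + t * d with hp
  set c : ℝ → ℂ := fun t => d ^ 2 * Q (p (min (max t 0) 1)) with hc
  have hc_cont : Continuous c := by
    apply continuous_const.mul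
    exact hQ.comp ((continuous_const.add ((Complex.continuous_ofReal.comp
      ((continuous_id.max continuous_const).min continuous_const)).mul continuous_const)))
  obtain ⟨M, hM⟩ : ∃ M : ℝ, ∀ t : ℝ, ‖c t‖ ≤ M := by
    have h1c : ∀ t : ℝ, c t = c (min (max t 0) 1) := by
      intro t
      simp only [hc]
      congr 2
      have h0' : (0:ℝ) ≤ min (max t 0) 1 := le_min (le_max_right _ _) zero_le_one
      have h1' : min (max t 0) 1 ≤ 1 := min_le_right _ _
      rw [max_eq_left h0', min_eq_left h1']
    obtain ⟨M, hM⟩ := (isCompact_Icc (a := (0:ℝ)) (b := 1)).exists_bound_of_continuousOn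
      hc_cont.continuousOn
    refine ⟨M, fun t => ?_⟩
    rw [h1c t]
    exact hM _ ⟨le_min (le_max_right _ _) zero_le_one, min_le_right _ _⟩
  have hM0 : (0:ℝ) ≤ M := le_trans (norm_nonneg _) (hM 0)
  set K : NNReal := Real.toNNReal (max 1 M) with hK
  have hKge : (max 1 M) = (K:ℝ) :=
    (Real.coe_toNNReal _ (le_trans zero_le_one (le_max_left _ _))).symm
  set v : ℝ → ℂ × ℂ → ℂ × ℂ := fun t w => (w.2, c t * w.1) with hv
  have hlip : ∀ t, LipschitzWith K (v t) := by
    intro t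
    apply LipschitzWith.of_dist_le_mul
    intro w w'
    simp only [hv, Prod.dist_eq]
    have h2 : dist (c t * w.1) (c t * w'.1) = ‖c t‖ * dist w.1 w'.1 := by
      simp only [dist_eq_norm, ← mul_sub, norm_mul]
    have hd1 : (0:ℝ) ≤ dist w.1 w'.1 := dist_nonneg
    have hd2 : (0:ℝ) ≤ dist w.2 w'.2 := dist_nonneg
    rw [max_le_iff]
    constructor
    · calc dist w.2 w'.2 ≤ max (dist w.1 w'.1) (dist w.2 w'.2) := le_max_right _ _
        _ ≤ (K:ℝ) * max (dist w.1 w'.1) (dist w.2 w'.2) := by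
            nlinarith [hKge ▸ le_max_left 1 M, le_max_right (dist w.1 w'.1) (dist w.2 w'.2)]
    · rw [h2]
      calc ‖c t‖ * dist w.1 w'.1 ≤ M * max (dist w.1 w'.1) (dist w.2 w'.2) :=
            mul_le_mul (hM t) (le_max_left _ _) dist_nonneg hM0
        _ ≤ (K:ℝ) * max (dist w.1 w'.1) (dist w.2 w'.2) := by
            apply mul_le_mul_of_nonneg_right _ (le_trans hd1 (le_max_left _ _))
            rw [← hKge]; exact le_max_right _ _
  set Y : ℝ → ℂ × ℂ := fun t => (g (p t), d * deriv g (p t)) with hY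
  have hpd : ∀ t : ℝ, HasDerivAt (fun s : ℝ => p s) d t := by
    intro t
    have h' : HasDerivAt (fun w : ℂ => z₀ + w * d) d (t:ℂ) := by
      simpa using ((hasDerivAt_id (t:ℂ)).mul_const d).const_add z₀
    exact h'.comp_ofReal
  have hcomp1 : ∀ t : ℝ, HasDerivAt (fun s : ℝ => g (p s)) (d * deriv g (p t)) t := by
    intro t
    have := ((hg (p t)).hasDerivAt).scomp t (hpd t)
    rw [smul_eq_mul] at this; exact this
  have hcomp2 : ∀ t : ℝ,
      HasDerivAt (fun s : ℝ => d * deriv g (p s)) (d * (d * deriv (deriv g) (p t))) t := by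
    intro t
    have := (((hg' (p t)).hasDerivAt).scomp t (hpd t)).const_mul d
    simpa [Function.comp, smul_eq_mul] using this
  have hYd : ∀ t ∈ Ico (0:ℝ) 1, HasDerivAt Y (v t (Y t)) t := by
    intro t ht
    have hclamp : min (max t 0) 1 = t := by rw [max_eq_left ht.1, min_eq_left ht.2.le]
    have h2 : v t (Y t) = (d * deriv g (p t), d * (d * deriv (deriv g) (p t))) := by
      simp only [hv, hY, hc, hclamp, hode (p t)]
      ring_nf
    rw [h2]
    exact (hcomp1 t).prodMk (hcomp2 t)
  have hcont : ContinuousOn Y (Icc (0:ℝ) 1) := by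
    apply ContinuousOn.prodMk
    · exact (hg.continuous.comp (continuous_const.add (Complex.continuous_ofReal.mul continuous_const) : Continuous p)).continuousOn
    · exact (continuous_const.mul (hg'.continuous.comp (continuous_const.add (Complex.continuous_ofReal.mul continuous_const) : Continuous p))).continuousOn
  have hzero : EqOn Y (fun _ => ((0:ℂ),(0:ℂ))) (Icc (0:ℝ) 1) := by
    apply ODE_solution_unique hlip hcont
      (fun t ht => (hYd t ht).hasDerivWithinAt)
      continuousOn_const
      (fun t ht => ?_)
      (by simp [hY, hp, h0, h1])
    have : v t ((fun _ => ((0:ℂ),(0:ℂ))) t) = (0,0) := by simp [hv]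
    rw [this]
    exact (hasDerivWithinAt_const _ _ _)
  have h1' := hzero (right_mem_Icc.2 zero_le_one)
  have : g (p 1) = 0 := congrArg Prod.fst h1'
  simpa [hp, hd] using this



lemma wronskian_const {Q y1 y2 : ℂ → ℂ} (h1 : Differentiable ℂ y1) (h2 : Differentiable ℂ y2)
    (he1 : ∀ z, deriv (deriv y1) z = Q z * y1 z) (he2 : ∀ z, deriv (deriv y2) z = Q z * y2 z) :
    ∀ z w : ℂ, y1 z * deriv y2 z - deriv y1 z * y2 z = y1 w * deriv y2 w - deriv y1 w * y2 w := by
  have h1' := entire_deriv h1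
  have h2' := entire_deriv h2
  set W : ℂ → ℂ := fun z => y1 z * deriv y2 z - deriv y1 z * y2 z with hW
  have hWd : Differentiable ℂ W := ((h1.mul h2').sub (h1'.mul h2))
  have hderiv : ∀ z, deriv W z = 0 := by
    intro z
    have h' : deriv W z = (deriv y1 z * deriv y2 z + y1 z * deriv (deriv y2) z)
        - (deriv (deriv y1) z * y2 z + deriv y1 z * deriv y2 z) := by
      rw [hW]
      rw [deriv_fun_sub ((h1 z).fun_mul (h2' z)) ((h1' z).fun_mul (h2 z)),
        deriv_fun_mul (h1 z) (h2' z), deriv_fun_mul (h1' z) (h2 z)]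
    rw [h', he1, he2]; ring
  exact fun z w => is_const_of_deriv_eq_zero hWd hderiv z w

/-- If two solutions have vanishing Wronskian at a point where `y1` doesn't vanish,
then `y2` is proportional to `y1`. -/
lemma proportional_of_wronskian_zero {Q y1 y2 : ℂ → ℂ} (hQ : Continuous Q)
    (h1 : Differentiable ℂ y1) (h2 : Differentiable ℂ y2)
    (he1 : ∀ z, deriv (deriv y1) z = Q z * y1 z) (he2 : ∀ z, deriv (deriv y2) z = Q z * y2 z)
    (x₀ : ℂ) (hx0 : y1 x₀ ≠ 0)
    (hW : y2 x₀ * deriv y1 x₀ - deriv y2 x₀ * y1 x₀ = 0) :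
    ∀ z, y2 z = (y2 x₀ / y1 x₀) * y1 z := by
  set c : ℂ := y2 x₀ / y1 x₀ with hc
  set g : ℂ → ℂ := fun z => y2 z - c * y1 z with hg
  have hgd : Differentiable ℂ g := h2.sub (h1.const_mul c)
  have hgd1 : ∀ z, deriv g z = deriv y2 z - c * deriv y1 z := by
    intro z
    rw [hg]
    rw [deriv_fun_sub (h2 z) ((h1 z).const_mul c), deriv_const_mul c (h1 z)]
  have hgd2 : ∀ z, deriv (deriv g) z = Q z * g z := by
    intro z
    have hfun : deriv g = fun z => deriv y2 z - c * deriv y1 z := funext hgd1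
    rw [hfun, deriv_fun_sub (entire_deriv h2 z) ((entire_deriv h1 z).const_mul c),
      deriv_const_mul c (entire_deriv h1 z), he1, he2, hg]
    ring
  have h0 : g x₀ = 0 := by
    rw [hg]; simp only [hc]; field_simp; ring
  have h1' : deriv g x₀ = 0 := by
    rw [hgd1, hc]
    field_simp
    linear_combination -hW
  have := ode_unique hQ hgd hgd2 x₀ h0 h1'
  intro z
  have hz := this z
  rw [hg] at hz
  simp only [hc] at hz ⊢
  linear_combination hz

/-- Every solution is a linear combination of two solutions with nonvanishing Wronskian. -/
lemma solution_combination {Q y y1 y2 : ℂ → ℂ} (hQ : Continuous Q)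
    (hy : Differentiable ℂ y) (h1 : Differentiable ℂ y1) (h2 : Differentiable ℂ y2)
    (hey : ∀ z, deriv (deriv y) z = Q z * y z)
    (he1 : ∀ z, deriv (deriv y1) z = Q z * y1 z) (he2 : ∀ z, deriv (deriv y2) z = Q z * y2 z)
    (x₀ : ℂ) (hW : y1 x₀ * deriv y2 x₀ - deriv y1 x₀ * y2 x₀ ≠ 0) :
    ∃ α β : ℂ, ∀ z, y z = α * y1 z + β * y2 z := by
  set W : ℂ := y1 x₀ * deriv y2 x₀ - deriv y1 x₀ * y2 x₀ with hWdef
  refine ⟨(y x₀ * deriv y2 x₀ - deriv y x₀ * y2 x₀) / W,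
    (y1 x₀ * deriv y x₀ - deriv y1 x₀ * y x₀) / W, ?_⟩
  set α : ℂ := (y x₀ * deriv y2 x₀ - deriv y x₀ * y2 x₀) / W with hα
  set β : ℂ := (y1 x₀ * deriv y x₀ - deriv y1 x₀ * y x₀) / W with hβ
  set g : ℂ → ℂ := fun z => y z - α * y1 z - β * y2 z with hg
  have hgd : Differentiable ℂ g := (hy.sub (h1.const_mul α)).sub (h2.const_mul β)
  have hgd1 : ∀ z, deriv g z = deriv y z - α * deriv y1 z - β * deriv y2 z := by
    intro z
    rw [hg, deriv_fun_sub ((hy z).fun_sub ((h1 z).const_mul α)) ((h2 z).const_mul β),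
      deriv_fun_sub (hy z) ((h1 z).const_mul α), deriv_const_mul α (h1 z), deriv_const_mul β (h2 z)]
  have hgd2 : ∀ z, deriv (deriv g) z = Q z * g z := by
    intro z
    have hfun : deriv g = fun z => deriv y z - α * deriv y1 z - β * deriv y2 z := funext hgd1
    rw [hfun, deriv_fun_sub ((entire_deriv hy z).fun_sub ((entire_deriv h1 z).const_mul α))
        ((entire_deriv h2 z).const_mul β),
      deriv_fun_sub (entire_deriv hy z) ((entire_deriv h1 z).const_mul α),
      deriv_const_mul α (entire_deriv h1 z), deriv_const_mul β (entire_deriv h2 z),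
      hey, he1, he2, hg]
    ring
  have h0 : g x₀ = 0 := by
    rw [hg, hα, hβ]
    field_simp
    ring
  have h1' : deriv g x₀ = 0 := by
    rw [hgd1, hα, hβ]
    field_simp
    ring
  have hzero := ode_unique hQ hgd hgd2 x₀ h0 h1'
  intro z
  have hz := hzero z
  rw [hg] at hz
  linear_combination hz



lemma omega_ne (m : ℕ) : omegaC m ≠ 0 := Complex.exp_ne_zero _

lemma mtwo_ne (m : ℕ) : ((m:ℂ) + 2) ≠ 0 := by
  have : ((m:ℂ) + 2) = ((m + 2 : ℕ) : ℂ) := by push_cast; ring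
  rw [this]
  exact_mod_cast Nat.succ_ne_zero (m+1)

lemma omega_pow_m2 (m : ℕ) : omegaC m ^ (((m:ℤ)+2)) = 1 := by
  rw [omegaC, ← Complex.exp_int_mul]
  have h : (((m:ℤ)+2 : ℤ) : ℂ) * (2 * (π:ℂ) * Complex.I / ((m:ℂ)+2)) = 2 * π * Complex.I := by
    have h2 : (((m:ℤ)+2 : ℤ) : ℂ) = (m:ℂ) + 2 := by push_cast; ring
    rw [h2]
    field_simp
    exact div_self (mtwo_ne m)
  rw [h, Complex.exp_two_pi_mul_I]

lemma omega_zpow_m2_mul (m : ℕ) (n : ℤ) : omegaC m ^ (((m:ℤ)+2) * n) = 1 := by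
  rw [zpow_mul, omega_pow_m2, one_zpow]

/-- continuity of the coefficient `z ↦ z^m + P_a(z) + λ` -/
lemma Qfun_continuous (m : ℕ) (a : Fin m → ℂ) (lam : ℂ) :
    Continuous (fun z : ℂ => z^m + Ppoly m a z + lam) := by
  apply Continuous.add
  · apply Continuous.add (continuous_pow m)
    unfold Ppoly
    exact continuous_finset_sum _ (fun i _ => continuous_const.mul (continuous_pow _))
  · exact continuous_const

section withf

variable {m : ℕ} {f : ℂ → (Fin m → ℂ) → ℂ → ℂ}

/-- section of `f` at fixed parameters is entire -/
lemma f_section_diff (hf : SibuyaHyp m f) (a : Fin m → ℂ) (lam : ℂ) :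
    Differentiable ℂ (fun w => f w a lam) := by
  intro z
  have h1 : DifferentiableAt ℂ (fun p : ℂ × (Fin m → ℂ) × ℂ => f p.1 p.2.1 p.2.2)
      (z, a, lam) := hf.1 _
  have h2 : DifferentiableAt ℂ (fun w : ℂ => (w, a, lam)) z :=
    (differentiableAt_id.prodMk (differentiableAt_const _))
  exact h1.comp z h2

lemma fks_diff (hf : SibuyaHyp m f) (k : ℤ) (a : Fin m → ℂ) (lam : ℂ) :
    Differentiable ℂ (fks m f k a lam) := by
  have := (f_section_diff hf (Gint m k a) (omegaC m ^ (2*k) * lam)).comp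
    ((differentiable_const (omegaC m ^ (-k))).mul differentiable_id)
  exact this

lemma deriv_fks (hf : SibuyaHyp m f) (k : ℤ) (a : Fin m → ℂ) (lam : ℂ) (z : ℂ) :
    deriv (fks m f k a lam) z
      = omegaC m ^ (-k) * deriv (fun w => f w (Gint m k a) (omegaC m ^ (2*k) * lam))
          (omegaC m ^ (-k) * z) := by
  set c := omegaC m ^ (-k) with hc
  set g := fun w => f w (Gint m k a) (omegaC m ^ (2*k) * lam) with hg
  have hgd : Differentiable ℂ g := f_section_diff hf _ _
  have h1 : HasDerivAt (fun z : ℂ => g (c * z)) (deriv g (c * z) * c) z := by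
    have hid : HasDerivAt (fun z : ℂ => c * z) c z := by
      simpa using (hasDerivAt_id z).const_mul c
    exact ((hgd (c*z)).hasDerivAt).comp z hid
  have : fks m f k a lam = fun z => g (c * z) := rfl
  rw [this, h1.deriv]; ring

end withf





section withf2

variable {m : ℕ} {f : ℂ → (Fin m → ℂ) → ℂ → ℂ}

lemma omega_key (m : ℕ) (k : ℤ) (i : Fin m) :
    (omegaC m ^ (-k))^2 * omegaC m ^ ((((m + 1 - (i:ℕ) : ℕ)):ℤ) * k)
      * (omegaC m ^ (-k)) ^ (m - 1 - (i:ℕ)) = 1 := by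
  have hω := omega_ne m
  have h1 : (omegaC m ^ (-k))^2 = omegaC m ^ ((-k) * 2) := by
    rw [← zpow_natCast (omegaC m ^ (-k)) 2, ← zpow_mul]
    norm_num
  have h2 : (omegaC m ^ (-k)) ^ (m - 1 - (i:ℕ)) = omegaC m ^ ((-k) * ((m - 1 - (i:ℕ) : ℕ) : ℤ)) := by
    rw [← zpow_natCast (omegaC m ^ (-k)) (m - 1 - (i:ℕ)), ← zpow_mul]
  rw [h1, h2, ← zpow_add₀ hω, ← zpow_add₀ hω]
  have hi : (i:ℕ) < m := i.2
  have e1 : (((m + 1 - (i:ℕ) : ℕ)):ℤ) = (m:ℤ) + 1 - (i:ℕ) := by omega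
  have e2 : (((m - 1 - (i:ℕ) : ℕ)):ℤ) = (m:ℤ) - 1 - (i:ℕ) := by omega
  rw [e1, e2]
  have : (-k) * 2 + ((m:ℤ) + 1 - (i:ℕ)) * k + (-k) * ((m:ℤ) - 1 - (i:ℕ)) = 0 := by ring
  rw [this, zpow_zero]

lemma fks_ode (hf : SibuyaHyp m f) (k : ℤ) (a : Fin m → ℂ) (lam : ℂ) (z : ℂ) :
    deriv (deriv (fks m f k a lam)) z
      = (z^m + Ppoly m a z + lam) * fks m f k a lam z := by
  have hω := omega_ne m
  set c := omegaC m ^ (-k) with hcdef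
  set a' := Gint m k a with ha'
  set lam' := omegaC m ^ (2*k) * lam with hlam'
  have hgd : Differentiable ℂ (fun w => f w a' lam') := f_section_diff hf _ _
  have hgd' : Differentiable ℂ (deriv (fun w => f w a' lam')) := entire_deriv hgd
  have h1 : deriv (fks m f k a lam) = fun z => c * deriv (fun w => f w a' lam') (c * z) :=
    funext (deriv_fks hf k a lam)
  have h2 : deriv (deriv (fks m f k a lam)) z
      = c * (deriv (deriv (fun w => f w a' lam')) (c * z) * c) := by
    rw [h1]
    have hid : HasDerivAt (fun z : ℂ => c * z) c z := by simpa using (hasDerivAt_id z).const_mul c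
    have h3 := (((hgd' (c*z)).hasDerivAt).comp z hid).const_mul c
    have h4 : (fun z : ℂ => c * (deriv (fun w => f w a' lam') ∘ fun z => c * z) z)
        = fun z => c * deriv (fun w => f w a' lam') (c * z) := rfl
    rw [← h4]
    exact h3.deriv
  rw [h2, hf.2.1 a' lam' (c*z)]
  have hfks : fks m f k a lam z = f (c * z) a' lam' := rfl
  rw [hfks]
  have key : c^2 * ((c*z)^m + Ppoly m a' (c*z) + lam') = z^m + Ppoly m a z + lam := by
    have hα : c^2 * (c*z)^m = z^m := by
      rw [mul_pow, ← mul_assoc, hcdef]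
      have h1' : (omegaC m ^ (-k))^2 * (omegaC m ^ (-k))^m = omegaC m ^ (((m:ℤ)+2) * (-k)) := by
        rw [← zpow_natCast (omegaC m ^ (-k)) 2, ← zpow_mul, ← zpow_natCast (omegaC m ^ (-k)) m,
          ← zpow_mul, ← zpow_add₀ hω]
        ring_nf
      rw [h1', omega_zpow_m2_mul, one_mul]
    have hβ : c^2 * lam' = lam := by
      rw [hlam', hcdef, ← mul_assoc]
      have h1' : (omegaC m ^ (-k))^2 * omegaC m ^ (2*k) = 1 := by
        rw [← zpow_natCast (omegaC m ^ (-k)) 2, ← zpow_mul, ← zpow_add₀ hω]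
        norm_num
        rw [(by ring : -(k * 2) + 2 * k = 0), zpow_zero]
      rw [h1', one_mul]
    have hγ : c^2 * Ppoly m a' (c*z) = Ppoly m a z := by
      unfold Ppoly
      rw [Finset.mul_sum]
      apply Finset.sum_congr rfl
      intro i _
      rw [ha']
      unfold Gint
      rw [mul_pow]
      calc c^2 * (omegaC m ^ ((((m + 1 - (i:ℕ) : ℕ)):ℤ) * k) * a i * (c^(m-1-(i:ℕ)) * z^(m-1-(i:ℕ))))
          = (c^2 * omegaC m ^ ((((m + 1 - (i:ℕ) : ℕ)):ℤ) * k) * c^(m-1-(i:ℕ)))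
            * (a i * z^(m-1-(i:ℕ))) := by ring
        _ = a i * z^(m-1-(i:ℕ)) := by rw [hcdef, omega_key m k i, one_mul]
    calc c^2 * ((c*z)^m + Ppoly m a' (c*z) + lam')
        = c^2*(c*z)^m + c^2*Ppoly m a' (c*z) + c^2*lam' := by ring
      _ = z^m + Ppoly m a z + lam := by rw [hα, hβ, hγ]
  calc c * (((c*z)^m + Ppoly m a' (c*z) + lam') * f (c*z) a' lam' * c)
      = (c^2 * ((c*z)^m + Ppoly m a' (c*z) + lam')) * f (c*z) a' lam' := by ring
    _ = (z^m + Ppoly m a z + lam) * f (c*z) a' lam' := by rw [key]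

end withf2




/-- exponent bound: eventually `t * log r + B * r^q2 - δ * r^q1 ≤ -r`. -/
lemma exponent_bound (t B δ q1 q2 : ℝ) (hδ : 0 < δ) (h12 : q2 + 1 ≤ q1) (hq2 : 1 ≤ q2) :
    ∀ᶠ r : ℝ in atTop, t * Real.log r + B * r ^ q2 - δ * r ^ q1 ≤ -r := by
  filter_upwards [eventually_ge_atTop (1:ℝ), eventually_ge_atTop ((|B|+|t|+1)/δ)] with r h1 h2
  have hr0 : (0:ℝ) < r := lt_of_lt_of_le zero_lt_one h1
  have hq2r : r ≤ r ^ q2 := by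
    calc r = r ^ (1:ℝ) := (Real.rpow_one r).symm
      _ ≤ r ^ q2 := Real.rpow_le_rpow_of_exponent_le h1 hq2
  have hq2pos : 0 < r ^ q2 := Real.rpow_pos_of_pos hr0 _
  have hlog : Real.log r ≤ r := (Real.log_le_sub_one_of_pos hr0).trans (by linarith)
  have hlog0 : 0 ≤ Real.log r := Real.log_nonneg h1
  have hrq1 : r ^ (q2 + 1) ≤ r ^ q1 := Real.rpow_le_rpow_of_exponent_le h1 h12
  have hrq2r : r ^ (q2 + 1) = r ^ q2 * r := by
    rw [Real.rpow_add hr0, Real.rpow_one]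
  have hδr : (|B|+|t|+1) * r ^ q2 ≤ δ * (r ^ q2 * r) := by
    have : (|B|+|t|+1) ≤ δ * r := by
      rw [div_le_iff₀ hδ] at h2; linarith [h2]
    nlinarith [hq2pos]
  have ht : t * Real.log r ≤ |t| * r ^ q2 := by
    calc t * Real.log r ≤ |t| * Real.log r := by
          apply mul_le_mul_of_nonneg_right (le_abs_self t) hlog0
      _ ≤ |t| * r ^ q2 := by
          apply mul_le_mul_of_nonneg_left (hlog.trans hq2r) (abs_nonneg t)
  have hB : B * r ^ q2 ≤ |B| * r ^ q2 :=
    mul_le_mul_of_nonneg_right (le_abs_self B) hq2pos.le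
  have : δ * r ^ q1 ≥ δ * (r ^ q2 * r) := by
    rw [← hrq2r]; exact mul_le_mul_of_nonneg_left hrq1 hδ.le
  nlinarith [hq2pos, hq2r]

lemma tendsto_decay_aux (t B δ q1 q2 : ℝ) (hδ : 0 < δ) (h12 : q2 + 1 ≤ q1) (hq2 : 1 ≤ q2) :
    Tendsto (fun r : ℝ => r ^ t * Real.exp (B * r ^ q2 - δ * r ^ q1)) atTop (nhds 0) := by
  have hexp : Tendsto (fun r : ℝ => Real.exp (-r)) atTop (nhds 0) :=
    Real.tendsto_exp_neg_atTop_nhds_zero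
  apply tendsto_of_tendsto_of_tendsto_of_le_of_le' tendsto_const_nhds hexp
  · filter_upwards [eventually_gt_atTop (0:ℝ)] with r hr
    positivity
  · filter_upwards [exponent_bound t B δ q1 q2 hδ h12 hq2, eventually_gt_atTop (0:ℝ)] with r hb hr
    have : r ^ t * Real.exp (B * r ^ q2 - δ * r ^ q1)
        = Real.exp (t * Real.log r + (B * r ^ q2 - δ * r ^ q1)) := by
      rw [Real.exp_add, Real.rpow_def_of_pos hr, mul_comm (Real.log r) t]
    rw [this]
    apply Real.exp_le_exp.2
    linarith

lemma tendsto_growth_aux (t B δ q1 q2 c0 : ℝ) (hδ : 0 < δ) (h12 : q2 + 1 ≤ q1) (hq2 : 1 ≤ q2)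
    (hc0 : 0 < c0) :
    Tendsto (fun r : ℝ => c0 * (r ^ t * Real.exp (δ * r ^ q1 - B * r ^ q2))) atTop atTop := by
  apply tendsto_atTop_mono' _ _ (Real.tendsto_exp_atTop.comp (tendsto_id.atTop_add
    (tendsto_const_nhds (x := Real.log c0))))
  filter_upwards [exponent_bound (-t) B δ q1 q2 hδ h12 hq2, eventually_gt_atTop (0:ℝ)]
    with r hb hr
  have heq : c0 * (r ^ t * Real.exp (δ * r ^ q1 - B * r ^ q2))
      = Real.exp (Real.log c0 + t * Real.log r + (δ * r ^ q1 - B * r ^ q2)) := by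
    rw [Real.exp_add, Real.exp_add, Real.exp_log hc0, Real.rpow_def_of_pos hr,
      mul_comm (Real.log r) t]
    ring
  rw [heq]
  have : (id r + Real.log c0) = r + Real.log c0 := rfl
  simp only [Function.comp]
  apply Real.exp_le_exp.2
  simp only [id]
  linarith



/-- the polar point `r·e^{iφ}` -/
lemma polar_ne_zero {r : ℝ} (hr : 0 < r) (φ : ℝ) : (r:ℂ) * Complex.exp (φ * I) ≠ 0 :=
  mul_ne_zero (by exact_mod_cast hr.ne') (Complex.exp_ne_zero _)

lemma polar_abs {r : ℝ} (hr : 0 ≤ r) (φ : ℝ) :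
    ‖(r:ℂ) * Complex.exp (φ * I)‖ = r := by
  rw [norm_mul, Complex.norm_real, Complex.norm_exp]
  simp [_root_.abs_of_nonneg hr]

lemma polar_arg {r : ℝ} (hr : 0 < r) {φ : ℝ} (hφ : φ ∈ Set.Ioc (-π) π) :
    Complex.arg ((r:ℂ) * Complex.exp (φ * I)) = φ := by
  rw [Complex.exp_mul_I]
  exact Complex.arg_mul_cos_add_sin_mul_I hr hφ

lemma polar_log {r : ℝ} (hr : 0 < r) {φ : ℝ} (hφ : φ ∈ Set.Ioc (-π) π) :
    Complex.log ((r:ℂ) * Complex.exp (φ * I)) = (Real.log r : ℂ) + φ * I := by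
  rw [Complex.log, polar_abs hr.le, polar_arg hr hφ, Complex.ofReal_log hr.le]

/-- `(r e^{iφ})^{w₀}` for a real exponent `w₀`. -/
lemma polar_cpow {r : ℝ} (hr : 0 < r) {φ : ℝ} (hφ : φ ∈ Set.Ioc (-π) π) (w₀ : ℝ) :
    ((r:ℂ) * Complex.exp (φ * I)) ^ ((w₀ : ℝ) : ℂ)
      = ((r ^ w₀ : ℝ) : ℂ) * Complex.exp (((w₀ * φ : ℝ) : ℂ) * I) := by
  rw [Complex.cpow_def_of_ne_zero (polar_ne_zero hr φ), polar_log hr hφ]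
  rw [add_mul, Complex.exp_add]
  congr 1
  · rw [← Complex.ofReal_mul, ← Complex.ofReal_exp, Real.rpow_def_of_pos hr]
  · push_cast
    ring_nf

/-- real part of `c·z^{w₀}` at a polar point, `w₀` real. -/
lemma polar_cpow_re {r : ℝ} (hr : 0 < r) {φ : ℝ} (hφ : φ ∈ Set.Ioc (-π) π) (w₀ c : ℝ) :
    (((c:ℝ):ℂ) * ((r:ℂ) * Complex.exp (φ * I)) ^ ((w₀ : ℝ) : ℂ)).re
      = c * r ^ w₀ * Real.cos (w₀ * φ) := by
  rw [polar_cpow hr hφ, Complex.exp_mul_I]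
  simp [Complex.mul_re, ← Complex.ofReal_mul, Complex.cos_ofReal_re, Complex.sin_ofReal_im]
  ring

lemma polar_cpow_abs {r : ℝ} (hr : 0 < r) {φ : ℝ} (hφ : φ ∈ Set.Ioc (-π) π) (w₀ : ℝ) :
    ‖((r:ℂ) * Complex.exp (φ * I)) ^ ((w₀ : ℝ) : ℂ)‖ = r ^ w₀ := by
  rw [polar_cpow hr hφ, norm_mul, Complex.norm_real, Complex.norm_exp]
  simp [_root_.abs_of_nonneg (Real.rpow_pos_of_pos hr w₀).le]



/-- constant controlling the subleading terms of `Fsib` -/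
def Bco (m : ℕ) (a : Fin m → ℂ) : ℝ :=
  ∑ j ∈ Finset.Icc 1 ((m+1)/2), ‖(2/((m:ℂ)+2-2*(j:ℂ))) * bcoef m a j‖

lemma Bco_nonneg (m : ℕ) (a : Fin m → ℂ) : 0 ≤ Bco m a :=
  Finset.sum_nonneg (fun j _ => norm_nonneg _)

lemma Fsib_re_bound (m : ℕ) (hm : 3 ≤ m) (a : Fin m → ℂ) {r : ℝ} (hr : 1 ≤ r) {φ : ℝ}
    (hφ : φ ∈ Set.Ioc (-π) π) :
    |(Fsib m a ((r:ℂ) * Complex.exp (φ * I))).re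
      - (2/((m:ℝ)+2)) * r ^ (((m:ℝ)+2)/2) * Real.cos ((((m:ℝ)+2)/2) * φ)|
      ≤ Bco m a * r ^ ((m:ℝ)/2) := by
  have hr0 : (0:ℝ) < r := lt_of_lt_of_le zero_lt_one hr
  set z : ℂ := (r:ℂ) * Complex.exp (φ * I) with hz
  have hlead : ((2/((m:ℂ)+2)) * z ^ (((m:ℂ)+2)/2)).re
      = (2/((m:ℝ)+2)) * r ^ (((m:ℝ)+2)/2) * Real.cos ((((m:ℝ)+2)/2) * φ) := by
    have hc : (2/((m:ℂ)+2)) = (((2/((m:ℝ)+2)) : ℝ) : ℂ) := by push_cast; ring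
    have hw : (((m:ℂ)+2)/2) = (((((m:ℝ)+2)/2) : ℝ) : ℂ) := by push_cast; ring
    rw [hc, hw, hz]
    exact polar_cpow_re hr0 hφ _ _
  have hsum : (Fsib m a z).re = ((2/((m:ℂ)+2)) * z ^ (((m:ℂ)+2)/2)).re
      + ∑ j ∈ Finset.Icc 1 ((m+1)/2),
          ((2/((m:ℂ)+2-2*(j:ℂ))) * bcoef m a j * z ^ (((m:ℂ)+2-2*(j:ℂ))/2)).re := by
    rw [Fsib, Complex.add_re, Complex.re_sum]
  rw [hsum, hlead]
  rw [add_sub_cancel_left]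
  calc |∑ j ∈ Finset.Icc 1 ((m+1)/2),
          ((2/((m:ℂ)+2-2*(j:ℂ))) * bcoef m a j * z ^ (((m:ℂ)+2-2*(j:ℂ))/2)).re|
      ≤ ∑ j ∈ Finset.Icc 1 ((m+1)/2),
          |((2/((m:ℂ)+2-2*(j:ℂ))) * bcoef m a j * z ^ (((m:ℂ)+2-2*(j:ℂ))/2)).re| :=
        Finset.abs_sum_le_sum_abs _ _
    _ ≤ ∑ j ∈ Finset.Icc 1 ((m+1)/2),
          ‖(2/((m:ℂ)+2-2*(j:ℂ))) * bcoef m a j‖ * r ^ ((m:ℝ)/2) := by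
        apply Finset.sum_le_sum
        intro j hj
        have hj1 : 1 ≤ j := (Finset.mem_Icc.1 hj).1
        have hj2 : j ≤ (m+1)/2 := (Finset.mem_Icc.1 hj).2
        have habs : |((2/((m:ℂ)+2-2*(j:ℂ))) * bcoef m a j * z ^ (((m:ℂ)+2-2*(j:ℂ))/2)).re|
            ≤ ‖(2/((m:ℂ)+2-2*(j:ℂ))) * bcoef m a j * z ^ (((m:ℂ)+2-2*(j:ℂ))/2)‖ :=
          Complex.abs_re_le_norm _
        apply habs.trans
        rw [norm_mul]
        have hwcast : (((m:ℂ)+2-2*(j:ℂ))/2) = (((((m:ℝ)+2-2*(j:ℝ))/2) : ℝ) : ℂ) := by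
          push_cast; ring
        have hzp : ‖z ^ (((m:ℂ)+2-2*(j:ℂ))/2)‖ = r ^ (((m:ℝ)+2-2*(j:ℝ))/2) := by
          rw [hwcast, hz]
          exact polar_cpow_abs hr0 hφ _
        rw [hzp]
        apply mul_le_mul_of_nonneg_left _ (norm_nonneg _)
        apply Real.rpow_le_rpow_of_exponent_le hr
        have : (1:ℝ) ≤ (j:ℝ) := by exact_mod_cast hj1
        linarith
    _ = Bco m a * r ^ ((m:ℝ)/2) := by rw [Bco, Finset.sum_mul]





section withf3

variable {m : ℕ} {f : ℂ → (Fin m → ℂ) → ℂ → ℂ}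

lemma extract (hf : SibuyaHyp m f) (hm : 3 ≤ m) (a' : Fin m → ℂ) (lam' : ℂ) :
    ∃ C : ℝ, 0 < C ∧ ∀ᶠ r : ℝ in atTop, ∀ φ : ℝ, |φ| ≤ 2*π/((m:ℝ)+2) →
      ∃ E : ℂ, ‖E‖ ≤ C * r ^ (-(1:ℝ)/2) ∧
        f ((r:ℂ) * Complex.exp (φ * I)) a' lam'
          = ((r:ℂ) * Complex.exp (φ * I)) ^ (rmExp m a') * (1 + E)
            * Complex.exp (-(Fsib m a' ((r:ℂ) * Complex.exp (φ * I)))) := by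
  have hε : 0 < π/((m:ℝ)+2) := by positivity
  obtain ⟨C, hC, R, hR, hprop⟩ := hf.2.2 (π/((m:ℝ)+2)) hε {(a',lam')} isCompact_singleton
  refine ⟨C, hC, ?_⟩
  filter_upwards [eventually_ge_atTop (max R 1)] with r hr φ hφ
  have hr1 : (1:ℝ) ≤ r := le_trans (le_max_right _ _) hr
  have hr0 : (0:ℝ) < r := lt_of_lt_of_le zero_lt_one hr1
  have hm3 : (3:ℝ) ≤ (m:ℝ) := by exact_mod_cast hm
  have hφπ : |φ| < π := by
    have h1 : 2*π/((m:ℝ)+2) < π := by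
      rw [div_lt_iff₀ (by positivity)]
      nlinarith [Real.pi_pos]
    linarith
  have hφIoc : φ ∈ Set.Ioc (-π) π := ⟨(abs_lt.1 hφπ).1, (abs_lt.1 hφπ).2.le⟩
  set z : ℂ := (r:ℂ) * Complex.exp (φ * I) with hzdef
  have habs : ‖z‖ = r := polar_abs hr0.le φ
  have harg : Complex.arg z = φ := polar_arg hr0 hφIoc
  have h1 : R ≤ ‖z‖ := by rw [habs]; exact le_trans (le_max_left _ _) hr
  have h2 : |Complex.arg z| ≤ 3*π/((m:ℝ)+2) - π/((m:ℝ)+2) := by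
    rw [harg]
    calc |φ| ≤ 2*π/((m:ℝ)+2) := hφ
      _ = 3*π/((m:ℝ)+2) - π/((m:ℝ)+2) := by ring
  obtain ⟨E, E', hE, hE', heq, _⟩ := hprop (a',lam') rfl z h1 h2
  exact ⟨E, by rwa [habs] at hE, heq⟩

lemma decay_ray (hf : SibuyaHyp m f) (hm : 3 ≤ m) (a' : Fin m → ℂ) (lam' : ℂ) :
    Tendsto (fun r : ℝ => f ((r:ℂ) * Complex.exp (((0:ℝ):ℂ) * I)) a' lam') atTop (nhds 0) := by
  obtain ⟨C, hC, hev⟩ := extract hf hm a' lam'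
  have hm3 : (3:ℝ) ≤ (m:ℝ) := by exact_mod_cast hm
  set t : ℝ := (rmExp m a').re with ht
  have hq2 : (1:ℝ) ≤ (m:ℝ)/2 := by linarith
  have htend : Tendsto (fun r : ℝ => (1+C) * (r ^ t
      * Real.exp (Bco m a' * r ^ ((m:ℝ)/2) - (2/((m:ℝ)+2)) * r ^ (((m:ℝ)+2)/2))))
      atTop (nhds 0) := by
    have := (tendsto_decay_aux t (Bco m a') (2/((m:ℝ)+2)) (((m:ℝ)+2)/2) ((m:ℝ)/2)
      (by positivity) (by linarith) hq2).const_mul (1+C)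
    simpa using this
  apply squeeze_zero_norm' _ htend
  filter_upwards [hev, eventually_ge_atTop (1:ℝ)] with r hr hr1
  have hr0 : (0:ℝ) < r := lt_of_lt_of_le zero_lt_one hr1
  have hφ0 : |(0:ℝ)| ≤ 2*π/((m:ℝ)+2) := by
    rw [abs_zero]
    positivity
  obtain ⟨E, hE, heq⟩ := hr 0 hφ0
  have hIoc : (0:ℝ) ∈ Set.Ioc (-π) π := ⟨by linarith [Real.pi_pos], Real.pi_pos.le⟩
  set z : ℂ := (r:ℂ) * Complex.exp (((0:ℝ):ℂ) * I) with hz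
  have hzne : z ≠ 0 := polar_ne_zero hr0 0
  have habs : ‖z‖ = r := polar_abs hr0.le 0
  have harg : Complex.arg z = 0 := polar_arg hr0 hIoc
  rw [show ‖f z a' lam'‖ = ‖f z a' lam'‖ from rfl, heq]
  rw [norm_mul, norm_mul]
  have h1 : ‖z ^ rmExp m a'‖ = r ^ t := by
    rw [Complex.norm_cpow_of_ne_zero hzne, habs, harg]
    simp [ht]
  have h2 : ‖1 + E‖ ≤ 1 + C := by
    calc ‖1 + E‖ ≤ ‖1‖ + ‖E‖ := norm_add_le _ _
      _ ≤ 1 + C * r ^ (-(1:ℝ)/2) := by simp; exact hE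
      _ ≤ 1 + C := by
          have : r ^ (-(1:ℝ)/2) ≤ 1 :=
            Real.rpow_le_one_of_one_le_of_nonpos hr1 (by norm_num)
          nlinarith
  have h3 : ‖Complex.exp (-(Fsib m a' z))‖
      ≤ Real.exp (Bco m a' * r ^ ((m:ℝ)/2) - (2/((m:ℝ)+2)) * r ^ (((m:ℝ)+2)/2)) := by
    rw [Complex.norm_exp]
    apply Real.exp_le_exp.2
    have hb := Fsib_re_bound m hm a' hr1 hIoc
    rw [mul_zero, Real.cos_zero, mul_one] at hb
    have := abs_le.1 hb
    simp only [Complex.neg_re]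
    linarith [this.1]
  calc ‖z ^ rmExp m a'‖ * ‖1+E‖ * ‖Complex.exp (-(Fsib m a' z))‖
      ≤ r ^ t * (1+C) * Real.exp (Bco m a' * r ^ ((m:ℝ)/2) - (2/((m:ℝ)+2)) * r ^ (((m:ℝ)+2)/2)) := by
        apply mul_le_mul
        · rw [h1]
          apply mul_le_mul_of_nonneg_left h2 (Real.rpow_pos_of_pos hr0 t).le
        · exact h3
        · exact norm_nonneg _
        · positivity
    _ = (1+C) * (r ^ t * Real.exp (Bco m a' * r ^ ((m:ℝ)/2) - (2/((m:ℝ)+2)) * r ^ (((m:ℝ)+2)/2))) := by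
        ring

lemma nonvanish_ray (hf : SibuyaHyp m f) (hm : 3 ≤ m) (a' : Fin m → ℂ) (lam' : ℂ) :
    ∀ᶠ r : ℝ in atTop, f ((r:ℂ) * Complex.exp (((0:ℝ):ℂ) * I)) a' lam' ≠ 0 := by
  obtain ⟨C, hC, hev⟩ := extract hf hm a' lam'
  have hsmall : ∀ᶠ r : ℝ in atTop, C * r ^ (-(1:ℝ)/2) < 1 := by
    have h0 : Tendsto (fun r : ℝ => C * r ^ (-(1:ℝ)/2)) atTop (nhds 0) := by
      have := (tendsto_rpow_neg_atTop (y := (1:ℝ)/2) (by norm_num)).const_mul C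
      simp only [mul_zero] at this
      convert this using 2
      ring_nf
    exact h0.eventually_lt_const zero_lt_one
  filter_upwards [hev, hsmall, eventually_ge_atTop (1:ℝ)] with r hr hsm hr1
  have hr0 : (0:ℝ) < r := lt_of_lt_of_le zero_lt_one hr1
  have hφ0 : |(0:ℝ)| ≤ 2*π/((m:ℝ)+2) := by
    rw [abs_zero]; positivity
  obtain ⟨E, hE, heq⟩ := hr 0 hφ0
  set z : ℂ := (r:ℂ) * Complex.exp (((0:ℝ):ℂ) * I) with hz
  have hzne : z ≠ 0 := polar_ne_zero hr0 0
  rw [heq]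
  apply mul_ne_zero (mul_ne_zero _ _) (Complex.exp_ne_zero _)
  · rw [Complex.cpow_def_of_ne_zero hzne]
    exact Complex.exp_ne_zero _
  · intro hcontra
    have : E = -1 := by linear_combination hcontra
    rw [this] at hE
    simp at hE
    linarith [lt_of_le_of_lt hE hsm]

lemma growth_ray (hf : SibuyaHyp m f) (hm : 3 ≤ m) (a' : Fin m → ℂ) (lam' : ℂ)
    (φ : ℝ) (hφ : |φ| ≤ 2*π/((m:ℝ)+2))
    (hcos : Real.cos ((((m:ℝ)+2)/2) * φ) = -1) :
    Tendsto (fun r : ℝ => ‖f ((r:ℂ) * Complex.exp ((φ:ℂ) * I)) a' lam'‖)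
      atTop atTop := by
  obtain ⟨C, hC, hev⟩ := extract hf hm a' lam'
  have hm3 : (3:ℝ) ≤ (m:ℝ) := by exact_mod_cast hm
  set t : ℝ := (rmExp m a').re with ht
  set c0 : ℝ := (1/2) * (1 / Real.exp (φ * (rmExp m a').im)) with hc0
  have hc0pos : 0 < c0 := by
    rw [hc0]
    positivity
  have hgrow := tendsto_growth_aux t (Bco m a') (2/((m:ℝ)+2)) (((m:ℝ)+2)/2) ((m:ℝ)/2) c0
    (by positivity) (by linarith) (by linarith) hc0pos
  apply tendsto_atTop_mono' _ _ hgrow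
  have hsmall : ∀ᶠ r : ℝ in atTop, C * r ^ (-(1:ℝ)/2) ≤ 1/2 := by
    have h0 : Tendsto (fun r : ℝ => C * r ^ (-(1:ℝ)/2)) atTop (nhds 0) := by
      have := (tendsto_rpow_neg_atTop (y := (1:ℝ)/2) (by norm_num)).const_mul C
      simp only [mul_zero] at this
      convert this using 2
      ring_nf
    exact (h0.eventually_le_const (by norm_num : (0:ℝ) < 1/2))
  filter_upwards [hev, hsmall, eventually_ge_atTop (1:ℝ)] with r hr hsm hr1
  have hr0 : (0:ℝ) < r := lt_of_lt_of_le zero_lt_one hr1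
  obtain ⟨E, hE, heq⟩ := hr φ hφ
  have hφπ : |φ| < π := by
    have h1 : 2*π/((m:ℝ)+2) < π := by
      rw [div_lt_iff₀ (by positivity)]
      nlinarith [Real.pi_pos]
    linarith
  have hIoc : φ ∈ Set.Ioc (-π) π := ⟨(abs_lt.1 hφπ).1, (abs_lt.1 hφπ).2.le⟩
  set z : ℂ := (r:ℂ) * Complex.exp ((φ:ℂ) * I) with hz
  have hzne : z ≠ 0 := polar_ne_zero hr0 φ
  have habs : ‖z‖ = r := polar_abs hr0.le φ
  have harg : Complex.arg z = φ := polar_arg hr0 hIoc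
  rw [heq, norm_mul, norm_mul]
  have h1 : ‖z ^ rmExp m a'‖ = r ^ t / Real.exp (φ * (rmExp m a').im) := by
    rw [Complex.norm_cpow_of_ne_zero hzne, habs, harg]
  have h2 : (1:ℝ)/2 ≤ ‖1 + E‖ := by
    have h' : ‖E‖ ≤ 1/2 := le_trans hE hsm
    have h'' := norm_add_le (1+E) (-E)
    simp at h''
    linarith
  have h3 : Real.exp ((2/((m:ℝ)+2)) * r ^ (((m:ℝ)+2)/2) - Bco m a' * r ^ ((m:ℝ)/2))
      ≤ ‖Complex.exp (-(Fsib m a' z))‖ := by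
    rw [Complex.norm_exp]
    apply Real.exp_le_exp.2
    have hb := Fsib_re_bound m hm a' hr1 hIoc
    rw [hcos] at hb
    have := (abs_le.1 hb).2
    simp only [Complex.neg_re]
    linarith
  calc c0 * (r ^ t * Real.exp ((2/((m:ℝ)+2)) * r ^ (((m:ℝ)+2)/2) - Bco m a' * r ^ ((m:ℝ)/2)))
      = (r ^ t / Real.exp (φ * (rmExp m a').im)) * (1/2)
        * Real.exp ((2/((m:ℝ)+2)) * r ^ (((m:ℝ)+2)/2) - Bco m a' * r ^ ((m:ℝ)/2)) := by
        rw [hc0]; ring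
    _ ≤ ‖z ^ rmExp m a'‖ * ‖1+E‖
        * ‖Complex.exp (-(Fsib m a' z))‖ := by
        apply mul_le_mul
        · rw [h1]
          apply mul_le_mul_of_nonneg_left h2 (by positivity)
        · exact h3
        · positivity
        · positivity

end withf3



end SibuyaProof

namespace SibuyaProof

lemma deriv_comp_const_mul' {g : ℂ → ℂ} (hg : Differentiable ℂ g) (c z : ℂ) :
    deriv (fun w => g (c * w)) z = c * deriv g (c * z) := by
  have hid : HasDerivAt (fun w : ℂ => c * w) c z := by simpa using (hasDerivAt_id z).const_mul c
  have h1 := ((hg (c*z)).hasDerivAt).comp z hid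
  have h2 : HasDerivAt (fun w => g (c * w)) (deriv g (c*z) * c) z := h1
  rw [h2.deriv]; ring

lemma deriv2_comp_const_mul {g : ℂ → ℂ} (hg : Differentiable ℂ g) (c z : ℂ) :
    deriv (deriv (fun w => g (c * w))) z = c^2 * deriv (deriv g) (c * z) := by
  have h1 : deriv (fun w => g (c * w)) = fun z => c * deriv g (c * z) :=
    funext (fun z => deriv_comp_const_mul' hg c z)
  rw [h1]
  have hg' := entire_deriv hg
  have hid : HasDerivAt (fun w : ℂ => c * w) c z := by simpa using (hasDerivAt_id z).const_mul c
  have h3 := ((hg' (c*z)).hasDerivAt).comp z hid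
  have h4 : HasDerivAt (fun w => deriv g (c * w)) (deriv (deriv g) (c*z) * c) z := h3
  have h5 := h4.const_mul c
  rw [h5.deriv]; ring

lemma Vpot_eq (m s : ℕ) (hs : 1 ≤ s) (a : Fin m → ℂ) (z : ℂ) :
    Vpot m (2*s-1) a z = -(Complex.I*z)^m - Ppoly m a (Complex.I*z) := by
  have hodd : Odd (2*s-1) := ⟨s-1, by omega⟩
  rw [Vpot, hodd.neg_one_pow]
  ring

lemma omega_zpow_mul_polar (m : ℕ) (j : ℤ) (r ψ : ℝ) :
    omegaC m ^ j * ((r:ℂ) * Complex.exp ((ψ:ℝ) * I))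
      = (r:ℂ) * Complex.exp (((2*π*(j:ℝ)/((m:ℝ)+2) + ψ : ℝ) : ℂ) * I) := by
  have h1 : omegaC m ^ j = Complex.exp ((j:ℂ) * (2 * (π:ℂ) * I / ((m:ℂ)+2))) := by
    rw [omegaC, ← Complex.exp_int_mul]
  rw [h1, mul_left_comm, ← Complex.exp_add]
  congr 2
  have hne : ((m:ℂ)+2) ≠ 0 := mtwo_ne m
  push_cast
  field_simp

lemma I_mul_polar (r ψ : ℝ) :
    Complex.I * ((r:ℂ) * Complex.exp ((ψ:ℝ) * I))
      = (r:ℂ) * Complex.exp (((π/2 + ψ : ℝ) : ℂ) * I) := by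
  have hI : Complex.I = Complex.exp (((π/2 : ℝ):ℂ) * I) := by
    rw [Complex.exp_mul_I, ← Complex.ofReal_cos, ← Complex.ofReal_sin,
      Real.cos_pi_div_two, Real.sin_pi_div_two]
    simp
  have h2 : (((π/2 + ψ : ℝ) : ℂ)) * I = ((π/2 : ℝ):ℂ) * I + (ψ:ℝ) * I := by
    push_cast; ring
  rw [h2, Complex.exp_add, ← hI]
  ring

lemma negI_mul_polar (r ψ : ℝ) :
    -Complex.I * ((r:ℂ) * Complex.exp ((ψ:ℝ) * I))
      = (r:ℂ) * Complex.exp (((-(π/2) + ψ : ℝ) : ℂ) * I) := by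
  have hI : -Complex.I = Complex.exp (((-(π/2) : ℝ):ℂ) * I) := by
    rw [Complex.exp_mul_I, ← Complex.ofReal_cos, ← Complex.ofReal_sin]
    rw [Real.cos_neg, Real.sin_neg, Real.cos_pi_div_two, Real.sin_pi_div_two]
    simp
  have h2 : (((-(π/2) + ψ : ℝ) : ℂ)) * I = ((-(π/2) : ℝ):ℂ) * I + (ψ:ℝ) * I := by
    push_cast; ring
  rw [h2, Complex.exp_add, ← hI]
  ring

end SibuyaProof

end
set_option maxHeartbeats 1000000 in
/-- For odd `ℓ = 2s - 1`, `λ` is an eigenvalue of `H_ℓ` if and only if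
`W_{-s,s}(a,λ) = 0`. -/
theorem eigenvalue_iff_wronskian_zero (m : ℕ) (hm : 3 ≤ m) (f : ℂ → (Fin m → ℂ) → ℂ → ℂ)
    (hf : SibuyaHyp m f) (s : ℕ) (hs : 1 ≤ s) (hℓ : 2*s - 1 ≤ m - 1)
    (a : Fin m → ℂ) (lam : ℂ) :
    IsEigenvalue m (2*s - 1) a lam ↔ Wjk m f (-(s:ℤ)) (s:ℤ) a lam = 0 := by
  classical
  have hm3 : (3:ℝ) ≤ (m:ℝ) := by exact_mod_cast hm
  have hmne : ((m:ℝ)+2) ≠ 0 := by positivity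
  have hQcont : Continuous (fun z : ℂ => z^m + Ppoly m a z + lam) :=
    SibuyaProof.Qfun_continuous m a lam
  have hdiff : ∀ k : ℤ, Differentiable ℂ (fks m f k a lam) :=
    fun k => SibuyaProof.fks_diff hf k a lam
  have hode : ∀ (k : ℤ) (z : ℂ), deriv (deriv (fks m f k a lam)) z
      = (z^m + Ppoly m a z + lam) * fks m f k a lam z :=
    fun k z => SibuyaProof.fks_ode hf k a lam z
  have hℓcast : ((2*s-1 : ℕ):ℝ) = 2*(s:ℝ)-1 := by
    rw [Nat.cast_sub (by omega : 1 ≤ 2*s)]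
    push_cast; ring
  -- evaluation of `fks` on polar rays
  have hfkspolar : ∀ (k : ℤ) (ψ χ : ℝ), 2*π*((-k : ℤ):ℝ)/((m:ℝ)+2) + ψ = χ →
      ∀ r : ℝ, fks m f k a lam ((r:ℂ) * Complex.exp ((ψ:ℝ) * Complex.I))
        = f ((r:ℂ) * Complex.exp ((χ:ℝ) * Complex.I)) (Gint m k a) (omegaC m ^ (2*k) * lam) := by
    intro k ψ χ hχ r
    rw [show fks m f k a lam ((r:ℂ) * Complex.exp ((ψ:ℝ) * Complex.I))
        = f (omegaC m ^ (-k) * ((r:ℂ) * Complex.exp ((ψ:ℝ) * Complex.I)))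
            (Gint m k a) (omegaC m ^ (2*k) * lam) from rfl]
    rw [SibuyaProof.omega_zpow_mul_polar m (-k) r ψ, hχ]
  -- decay along the canonical rays
  have hdecay : ∀ k : ℤ, Filter.Tendsto (fun r : ℝ => fks m f k a lam
      ((r:ℂ) * Complex.exp (((2*π*(k:ℝ)/((m:ℝ)+2) : ℝ):ℂ) * Complex.I))) Filter.atTop (nhds 0) := by
    intro k
    have h1 := SibuyaProof.decay_ray hf hm (Gint m k a) (omegaC m ^ (2*k) * lam)
    apply Filter.Tendsto.congr _ h1
    intro r
    exact (hfkspolar k (2*π*(k:ℝ)/((m:ℝ)+2)) 0 (by push_cast; ring) r).symm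
  -- eventual nonvanishing along the canonical rays
  have hnonv : ∀ k : ℤ, ∀ᶠ r : ℝ in Filter.atTop, fks m f k a lam
      ((r:ℂ) * Complex.exp (((2*π*(k:ℝ)/((m:ℝ)+2) : ℝ):ℂ) * Complex.I)) ≠ 0 := by
    intro k
    filter_upwards [SibuyaProof.nonvanish_ray hf hm (Gint m k a) (omegaC m ^ (2*k) * lam)] with r hr
    rw [hfkspolar k (2*π*(k:ℝ)/((m:ℝ)+2)) 0 (by push_cast; ring) r]
    exact hr
  -- growth of the shifted solutions along the canonical rays
  have hgrow : ∀ (k j : ℤ) (φ : ℝ), 2*π*((-k : ℤ):ℝ)/((m:ℝ)+2) + 2*π*(j:ℝ)/((m:ℝ)+2) = φ →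
      |φ| ≤ 2*π/((m:ℝ)+2) → Real.cos ((((m:ℝ)+2)/2)*φ) = -1 →
      Filter.Tendsto (fun r : ℝ => ‖fks m f k a lam
        ((r:ℂ) * Complex.exp (((2*π*(j:ℝ)/((m:ℝ)+2) : ℝ):ℂ) * Complex.I))‖) Filter.atTop Filter.atTop := by
    intro k j φ hφeq hφle hφcos
    have h1 := SibuyaProof.growth_ray hf hm (Gint m k a) (omegaC m ^ (2*k) * lam) φ hφle hφcos
    apply Filter.Tendsto.congr _ h1
    intro r
    rw [hfkspolar k (2*π*(j:ℝ)/((m:ℝ)+2)) φ hφeq r]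
  -- constancy of Wronskians
  have hWconst : ∀ (j k : ℤ) (x : ℂ),
      fks m f j a lam x * deriv (fks m f k a lam) x
        - deriv (fks m f j a lam) x * fks m f k a lam x = Wjk m f j k a lam :=
    fun j k x => SibuyaProof.wronskian_const (hdiff j) (hdiff k) (hode j) (hode k) x 0
  -- growth data for the two relevant rays
  have hφ1 : (2*π*((-((s:ℤ)+1) : ℤ):ℝ)/((m:ℝ)+2) + 2*π*(((s:ℤ)):ℝ)/((m:ℝ)+2) : ℝ)
      = -(2*π/((m:ℝ)+2)) := by push_cast; ring
  have hφ2 : (2*π*((-(-(s:ℤ)-1) : ℤ):ℝ)/((m:ℝ)+2) + 2*π*(((-(s:ℤ)):ℤ):ℝ)/((m:ℝ)+2) : ℝ)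
      = 2*π/((m:ℝ)+2) := by push_cast; ring
  have habs1 : |(-(2*π/((m:ℝ)+2)))| ≤ 2*π/((m:ℝ)+2) := by
    rw [abs_neg, _root_.abs_of_nonneg (by positivity)]
  have habs2 : |(2*π/((m:ℝ)+2))| ≤ 2*π/((m:ℝ)+2) := by
    rw [_root_.abs_of_nonneg (by positivity)]
  have hcosval : Real.cos ((((m:ℝ)+2)/2) * (2*π/((m:ℝ)+2))) = -1 := by
    rw [show (((m:ℝ)+2)/2) * (2*π/((m:ℝ)+2)) = π by field_simp, Real.cos_pi]
  have hcos1 : Real.cos ((((m:ℝ)+2)/2) * (-(2*π/((m:ℝ)+2)))) = -1 := by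
    rw [mul_neg, Real.cos_neg]
    exact hcosval
  constructor
  · -- forward direction: eigenvalue → Wronskian vanishes
    intro hEig
    obtain ⟨u, hud, hunc, huode, hut1, hut2⟩ := hEig
    have hyd : Differentiable ℂ (fun w => u (-Complex.I * w)) :=
      hud.comp ((differentiable_const (-Complex.I)).mul differentiable_id)
    have hyode : ∀ x : ℂ, deriv (deriv (fun w => u (-Complex.I * w))) x
        = (x^m + Ppoly m a x + lam) * u (-Complex.I * x) := by
      intro x
      rw [SibuyaProof.deriv2_comp_const_mul hud (-Complex.I) x]
      have hIx : Complex.I * (-Complex.I * x) = x := by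
        rw [← mul_assoc, mul_neg, Complex.I_mul_I, neg_neg, one_mul]
      have h1 := huode (-Complex.I * x)
      rw [SibuyaProof.Vpot_eq m s hs, hIx] at h1
      have hI2 : (-Complex.I)^2 = -1 := by
        rw [neg_pow, Complex.I_sq]; ring
      rw [hI2]
      linear_combination h1
    have habs_of : ∀ (g : ℝ → ℂ), Filter.Tendsto g Filter.atTop (nhds 0) →
        Filter.Tendsto (fun r => ‖g r‖) Filter.atTop (nhds 0) := by
      intro g hg
      have h := hg.norm
      simpa using h
    have hcontra : ∀ (g : ℝ → ℂ), Filter.Tendsto (fun r => ‖g r‖)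
        Filter.atTop Filter.atTop → Filter.Tendsto g Filter.atTop (nhds 0) → False := by
      intro g hg1 hg2
      obtain ⟨r, h1, h2⟩ := ((hg1.eventually_ge_atTop 1).and
        ((habs_of g hg2).eventually_lt_const zero_lt_one)).exists
      linarith
    -- the Wronskian of `fks s` and `fks (s+1)` does not vanish
    have hWsne : Wjk m f (s:ℤ) ((s:ℤ)+1) a lam ≠ 0 := by
      intro h0
      obtain ⟨r₂, hr₂⟩ := (hnonv (s:ℤ)).exists
      have hWx : fks m f ((s:ℤ)+1) a lam
            ((r₂:ℂ) * Complex.exp (((2*π*(((s:ℤ)):ℝ)/((m:ℝ)+2) : ℝ):ℂ) * Complex.I))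
            * deriv (fks m f (s:ℤ) a lam)
            ((r₂:ℂ) * Complex.exp (((2*π*(((s:ℤ)):ℝ)/((m:ℝ)+2) : ℝ):ℂ) * Complex.I))
          - deriv (fks m f ((s:ℤ)+1) a lam)
            ((r₂:ℂ) * Complex.exp (((2*π*(((s:ℤ)):ℝ)/((m:ℝ)+2) : ℝ):ℂ) * Complex.I))
            * fks m f (s:ℤ) a lam
            ((r₂:ℂ) * Complex.exp (((2*π*(((s:ℤ)):ℝ)/((m:ℝ)+2) : ℝ):ℂ) * Complex.I)) = 0 := by
        rw [hWconst ((s:ℤ)+1) (s:ℤ)]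
        have hsk : Wjk m f ((s:ℤ)+1) (s:ℤ) a lam = - Wjk m f (s:ℤ) ((s:ℤ)+1) a lam := by
          simp only [Wjk]; ring
        rw [hsk, h0, neg_zero]
      have hp2 := SibuyaProof.proportional_of_wronskian_zero hQcont (hdiff (s:ℤ))
        (hdiff ((s:ℤ)+1)) (hode (s:ℤ)) (hode ((s:ℤ)+1)) _ hr₂ hWx
      apply hcontra (fun r : ℝ => fks m f ((s:ℤ)+1) a lam
        ((r:ℂ) * Complex.exp (((2*π*(((s:ℤ)):ℝ)/((m:ℝ)+2) : ℝ):ℂ) * Complex.I)))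
      · exact hgrow ((s:ℤ)+1) (s:ℤ) (-(2*π/((m:ℝ)+2))) hφ1 habs1 hcos1
      · have hud2 := (hdecay (s:ℤ)).const_mul
          (fks m f ((s:ℤ)+1) a lam
            ((r₂:ℂ) * Complex.exp (((2*π*(((s:ℤ)):ℝ)/((m:ℝ)+2) : ℝ):ℂ) * Complex.I))
          / fks m f (s:ℤ) a lam
            ((r₂:ℂ) * Complex.exp (((2*π*(((s:ℤ)):ℝ)/((m:ℝ)+2) : ℝ):ℂ) * Complex.I)))
        rw [mul_zero] at hud2
        apply Filter.Tendsto.congr _ hud2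
        intro r
        exact (hp2 _).symm
    -- the Wronskian of `fks (-s)` and `fks (-s-1)` does not vanish
    have hWnsne : Wjk m f (-(s:ℤ)) (-(s:ℤ)-1) a lam ≠ 0 := by
      intro h0
      obtain ⟨r₃, hr₃⟩ := (hnonv (-(s:ℤ))).exists
      have hWx : fks m f (-(s:ℤ)-1) a lam
            ((r₃:ℂ) * Complex.exp (((2*π*((((-(s:ℤ))):ℤ):ℝ)/((m:ℝ)+2) : ℝ):ℂ) * Complex.I))
            * deriv (fks m f (-(s:ℤ)) a lam)
            ((r₃:ℂ) * Complex.exp (((2*π*((((-(s:ℤ))):ℤ):ℝ)/((m:ℝ)+2) : ℝ):ℂ) * Complex.I))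
          - deriv (fks m f (-(s:ℤ)-1) a lam)
            ((r₃:ℂ) * Complex.exp (((2*π*((((-(s:ℤ))):ℤ):ℝ)/((m:ℝ)+2) : ℝ):ℂ) * Complex.I))
            * fks m f (-(s:ℤ)) a lam
            ((r₃:ℂ) * Complex.exp (((2*π*((((-(s:ℤ))):ℤ):ℝ)/((m:ℝ)+2) : ℝ):ℂ) * Complex.I)) = 0 := by
        rw [hWconst (-(s:ℤ)-1) (-(s:ℤ))]
        have hsk : Wjk m f (-(s:ℤ)-1) (-(s:ℤ)) a lam
            = - Wjk m f (-(s:ℤ)) (-(s:ℤ)-1) a lam := by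
          simp only [Wjk]; ring
        rw [hsk, h0, neg_zero]
      have hp2 := SibuyaProof.proportional_of_wronskian_zero hQcont (hdiff (-(s:ℤ)))
        (hdiff (-(s:ℤ)-1)) (hode (-(s:ℤ))) (hode (-(s:ℤ)-1)) _ hr₃ hWx
      apply hcontra (fun r : ℝ => fks m f (-(s:ℤ)-1) a lam
        ((r:ℂ) * Complex.exp (((2*π*((((-(s:ℤ))):ℤ):ℝ)/((m:ℝ)+2) : ℝ):ℂ) * Complex.I)))
      · exact hgrow (-(s:ℤ)-1) (-(s:ℤ)) (2*π/((m:ℝ)+2)) hφ2 habs2 hcosval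
      · have hud2 := (hdecay (-(s:ℤ))).const_mul
          (fks m f (-(s:ℤ)-1) a lam
            ((r₃:ℂ) * Complex.exp (((2*π*((((-(s:ℤ))):ℤ):ℝ)/((m:ℝ)+2) : ℝ):ℂ) * Complex.I))
          / fks m f (-(s:ℤ)) a lam
            ((r₃:ℂ) * Complex.exp (((2*π*((((-(s:ℤ))):ℤ):ℝ)/((m:ℝ)+2) : ℝ):ℂ) * Complex.I)))
        rw [mul_zero] at hud2
        apply Filter.Tendsto.congr _ hud2
        intro r
        exact (hp2 _).symm
    -- expand y in the two bases
    obtain ⟨α, β, hcomb1⟩ := SibuyaProof.solution_combination hQcont hyd (hdiff (s:ℤ))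
      (hdiff ((s:ℤ)+1)) hyode (hode (s:ℤ)) (hode ((s:ℤ)+1)) 0
      (by rw [hWconst (s:ℤ) ((s:ℤ)+1) 0]; exact hWsne)
    obtain ⟨α', β', hcomb2⟩ := SibuyaProof.solution_combination hQcont hyd (hdiff (-(s:ℤ)))
      (hdiff (-(s:ℤ)-1)) hyode (hode (-(s:ℤ))) (hode (-(s:ℤ)-1)) 0
      (by rw [hWconst (-(s:ℤ)) (-(s:ℤ)-1) 0]; exact hWnsne)
    -- decay of y along the two canonical rays
    have hangY1 : (-(π/2) + (((2*s-1 : ℕ):ℝ)+1)*π/((m:ℝ)+2) : ℝ)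
        = -(π/2) + 2*π*(((s:ℤ)):ℝ)/((m:ℝ)+2) := by rw [hℓcast]; push_cast; ring
    have hangY2 : (-(π/2) - (((2*s-1 : ℕ):ℝ)+1)*π/((m:ℝ)+2) : ℝ)
        = -(π/2) + 2*π*((((-(s:ℤ))):ℤ):ℝ)/((m:ℝ)+2) := by rw [hℓcast]; push_cast; ring
    have hyray1 : Filter.Tendsto (fun r : ℝ => u (-Complex.I *
        ((r:ℂ) * Complex.exp (((2*π*(((s:ℤ)):ℝ)/((m:ℝ)+2) : ℝ):ℂ) * Complex.I))))
        Filter.atTop (nhds 0) := by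
      apply Filter.Tendsto.congr _ hut1
      intro r
      rw [SibuyaProof.negI_mul_polar r (2*π*(((s:ℤ)):ℝ)/((m:ℝ)+2))]
      rw [hangY1]
    have hyray2 : Filter.Tendsto (fun r : ℝ => u (-Complex.I *
        ((r:ℂ) * Complex.exp (((2*π*((((-(s:ℤ))):ℤ):ℝ)/((m:ℝ)+2) : ℝ):ℂ) * Complex.I))))
        Filter.atTop (nhds 0) := by
      apply Filter.Tendsto.congr _ hut2
      intro r
      rw [SibuyaProof.negI_mul_polar r (2*π*((((-(s:ℤ))):ℤ):ℝ)/((m:ℝ)+2))]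
      rw [hangY2]
    -- β = 0
    have hβtend : Filter.Tendsto (fun r : ℝ => β * fks m f ((s:ℤ)+1) a lam
        ((r:ℂ) * Complex.exp (((2*π*(((s:ℤ)):ℝ)/((m:ℝ)+2) : ℝ):ℂ) * Complex.I)))
        Filter.atTop (nhds 0) := by
      have h6 := hyray1.sub ((hdecay (s:ℤ)).const_mul α)
      rw [mul_zero, sub_zero] at h6
      apply Filter.Tendsto.congr _ h6
      intro r
      have h7 := hcomb1 ((r:ℂ) * Complex.exp (((2*π*(((s:ℤ)):ℝ)/((m:ℝ)+2) : ℝ):ℂ) * Complex.I))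
      linear_combination h7
    have hβ0 : β = 0 := by
      by_contra hβ
      apply hcontra (fun r : ℝ => fks m f ((s:ℤ)+1) a lam
        ((r:ℂ) * Complex.exp (((2*π*(((s:ℤ)):ℝ)/((m:ℝ)+2) : ℝ):ℂ) * Complex.I)))
      · exact hgrow ((s:ℤ)+1) (s:ℤ) (-(2*π/((m:ℝ)+2))) hφ1 habs1 hcos1
      · have h8 := hβtend.const_mul β⁻¹
        rw [mul_zero] at h8
        apply Filter.Tendsto.congr _ h8
        intro r
        rw [← mul_assoc, inv_mul_cancel₀ hβ, one_mul]
    -- β' = 0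
    have hβ'tend : Filter.Tendsto (fun r : ℝ => β' * fks m f (-(s:ℤ)-1) a lam
        ((r:ℂ) * Complex.exp (((2*π*((((-(s:ℤ))):ℤ):ℝ)/((m:ℝ)+2) : ℝ):ℂ) * Complex.I)))
        Filter.atTop (nhds 0) := by
      have h6 := hyray2.sub ((hdecay (-(s:ℤ))).const_mul α')
      rw [mul_zero, sub_zero] at h6
      apply Filter.Tendsto.congr _ h6
      intro r
      have h7 := hcomb2 ((r:ℂ) * Complex.exp
        (((2*π*((((-(s:ℤ))):ℤ):ℝ)/((m:ℝ)+2) : ℝ):ℂ) * Complex.I))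
      linear_combination h7
    have hβ'0 : β' = 0 := by
      by_contra hβ'
      apply hcontra (fun r : ℝ => fks m f (-(s:ℤ)-1) a lam
        ((r:ℂ) * Complex.exp (((2*π*((((-(s:ℤ))):ℤ):ℝ)/((m:ℝ)+2) : ℝ):ℂ) * Complex.I)))
      · exact hgrow (-(s:ℤ)-1) (-(s:ℤ)) (2*π/((m:ℝ)+2)) hφ2 habs2 hcosval
      · have h8 := hβ'tend.const_mul β'⁻¹
        rw [mul_zero] at h8
        apply Filter.Tendsto.congr _ h8
        intro r
        rw [← mul_assoc, inv_mul_cancel₀ hβ', one_mul]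
    -- α' ≠ 0
    have hα'ne : α' ≠ 0 := by
      intro h0
      have hy0 : ∀ z : ℂ, u (-Complex.I * z) = 0 := by
        intro z
        have h9 := hcomb2 z
        rw [h0, hβ'0] at h9
        simpa using h9
      obtain ⟨zz, ww, hne⟩ := hunc
      apply hne
      have e1 : u zz = 0 := by
        have : u (-Complex.I * (Complex.I * zz)) = u zz := by
          rw [← mul_assoc, neg_mul, Complex.I_mul_I, neg_neg, one_mul]
        rw [← this, hy0]
      have e2 : u ww = 0 := by
        have : u (-Complex.I * (Complex.I * ww)) = u ww := by
          rw [← mul_assoc, neg_mul, Complex.I_mul_I, neg_neg, one_mul]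
        rw [← this, hy0]
      rw [e1, e2]
    -- conclude
    have hfin : ∀ z : ℂ, fks m f (-(s:ℤ)) a lam z = (α/α') * fks m f (s:ℤ) a lam z := by
      intro z
      have h8 := hcomb1 z
      have h9 := hcomb2 z
      rw [hβ0] at h8; rw [hβ'0] at h9
      have h10 : α' * fks m f (-(s:ℤ)) a lam z = α * fks m f (s:ℤ) a lam z := by
        linear_combination h9.symm + h8
      field_simp
      linear_combination h10
    have hfeq : fks m f (-(s:ℤ)) a lam = fun z => (α/α') * fks m f (s:ℤ) a lam z :=
      funext hfin
    have hder : deriv (fks m f (-(s:ℤ)) a lam) 0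
        = (α/α') * deriv (fks m f (s:ℤ) a lam) 0 := by
      rw [hfeq]
      exact deriv_const_mul _ ((hdiff (s:ℤ)) 0)
    simp only [Wjk]
    rw [hfin 0, hder]
    ring
  · -- backward direction
    intro hW
    obtain ⟨r₀, hr₀⟩ := (hnonv (s:ℤ)).exists
    have hx₀ne : fks m f (s:ℤ) a lam
        ((r₀:ℂ) * Complex.exp (((2*π*(((s:ℤ)):ℝ)/((m:ℝ)+2) : ℝ):ℂ) * Complex.I)) ≠ 0 := hr₀
    have hWx₀ : fks m f (-(s:ℤ)) a lam
          ((r₀:ℂ) * Complex.exp (((2*π*(((s:ℤ)):ℝ)/((m:ℝ)+2) : ℝ):ℂ) * Complex.I))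
          * deriv (fks m f (s:ℤ) a lam)
          ((r₀:ℂ) * Complex.exp (((2*π*(((s:ℤ)):ℝ)/((m:ℝ)+2) : ℝ):ℂ) * Complex.I))
        - deriv (fks m f (-(s:ℤ)) a lam)
          ((r₀:ℂ) * Complex.exp (((2*π*(((s:ℤ)):ℝ)/((m:ℝ)+2) : ℝ):ℂ) * Complex.I))
          * fks m f (s:ℤ) a lam
          ((r₀:ℂ) * Complex.exp (((2*π*(((s:ℤ)):ℝ)/((m:ℝ)+2) : ℝ):ℂ) * Complex.I)) = 0 := by
      rw [hWconst]; exact hW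
    have hprop := SibuyaProof.proportional_of_wronskian_zero hQcont (hdiff (s:ℤ))
      (hdiff (-(s:ℤ))) (hode (s:ℤ)) (hode (-(s:ℤ))) _ hx₀ne hWx₀
    set c : ℂ := fks m f (-(s:ℤ)) a lam
        ((r₀:ℂ) * Complex.exp (((2*π*(((s:ℤ)):ℝ)/((m:ℝ)+2) : ℝ):ℂ) * Complex.I))
      / fks m f (s:ℤ) a lam
        ((r₀:ℂ) * Complex.exp (((2*π*(((s:ℤ)):ℝ)/((m:ℝ)+2) : ℝ):ℂ) * Complex.I)) with hc
    refine ⟨fun z => fks m f (-(s:ℤ)) a lam (Complex.I * z),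
      (hdiff (-(s:ℤ))).comp ((differentiable_const Complex.I).mul differentiable_id),
      ?_, ?_, ?_, ?_⟩
    · -- nonconstant
      by_contra hcon
      push_neg at hcon
      have hfksu : ∀ x : ℂ, fks m f (-(s:ℤ)) a lam x = fks m f (-(s:ℤ)) a lam 0 := by
        intro x
        have h2 := hcon (-Complex.I * x) 0
        rw [← mul_assoc, mul_neg, Complex.I_mul_I, neg_neg, one_mul, mul_zero] at h2
        exact h2
      obtain ⟨r₁, hr₁⟩ := (hnonv (-(s:ℤ))).exists
      have hzero : fks m f (-(s:ℤ)) a lam 0 = 0 := by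
        have h4 : Filter.Tendsto (fun _ : ℝ => fks m f (-(s:ℤ)) a lam 0)
            Filter.atTop (nhds (0:ℂ)) := by
          apply Filter.Tendsto.congr _ (hdecay (-(s:ℤ)))
          intro r; rw [hfksu]
        exact tendsto_nhds_unique tendsto_const_nhds h4
      exact hr₁ (by rw [hfksu, hzero])
    · -- the ODE
      intro z
      have hd2 : deriv (deriv (fun z => fks m f (-(s:ℤ)) a lam (Complex.I * z))) z
          = Complex.I^2 * deriv (deriv (fks m f (-(s:ℤ)) a lam)) (Complex.I * z) :=
        SibuyaProof.deriv2_comp_const_mul (hdiff (-(s:ℤ))) Complex.I z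
      rw [hd2, hode (-(s:ℤ)) (Complex.I*z), Complex.I_sq, SibuyaProof.Vpot_eq m s hs]
      ring
    · -- decay along the first ray
      have hangY : (-(π/2) + (((2*s-1 : ℕ):ℝ)+1)*π/((m:ℝ)+2) : ℝ)
          = -(π/2) + 2*π*(((s:ℤ)):ℝ)/((m:ℝ)+2) := by
        rw [hℓcast]; push_cast; ring
      have hud := (hdecay (s:ℤ)).const_mul c
      rw [mul_zero] at hud
      apply Filter.Tendsto.congr _ hud
      intro r
      calc c * fks m f (s:ℤ) a lam
            ((r:ℂ) * Complex.exp (((2*π*(((s:ℤ)):ℝ)/((m:ℝ)+2) : ℝ):ℂ) * Complex.I))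
          = fks m f (-(s:ℤ)) a lam
            ((r:ℂ) * Complex.exp (((2*π*(((s:ℤ)):ℝ)/((m:ℝ)+2) : ℝ):ℂ) * Complex.I)) :=
            (hprop _).symm
        _ = fks m f (-(s:ℤ)) a lam (Complex.I * ((r:ℂ) * Complex.exp
              (((-(π/2) + (((2*s-1 : ℕ):ℝ)+1)*π/((m:ℝ)+2) : ℝ):ℂ) * Complex.I))) := by
            rw [SibuyaProof.I_mul_polar r (-(π/2) + (((2*s-1 : ℕ):ℝ)+1)*π/((m:ℝ)+2))]
            rw [hangY]
            congr 3
            push_cast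
            ring
    · -- decay along the second ray
      have hangY2 : (-(π/2) - (((2*s-1 : ℕ):ℝ)+1)*π/((m:ℝ)+2) : ℝ)
          = -(π/2) + 2*π*(((-(s:ℤ)):ℤ):ℝ)/((m:ℝ)+2) := by
        rw [hℓcast]; push_cast; ring
      apply Filter.Tendsto.congr _ (hdecay (-(s:ℤ)))
      intro r
      calc fks m f (-(s:ℤ)) a lam
            ((r:ℂ) * Complex.exp (((2*π*((((-(s:ℤ))):ℤ):ℝ)/((m:ℝ)+2) : ℝ):ℂ) * Complex.I))
          = fks m f (-(s:ℤ)) a lam (Complex.I * ((r:ℂ) * Complex.exp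
              (((-(π/2) - (((2*s-1 : ℕ):ℝ)+1)*π/((m:ℝ)+2) : ℝ):ℂ) * Complex.I))) := by
            rw [SibuyaProof.I_mul_polar r (-(π/2) - (((2*s-1 : ℕ):ℝ)+1)*π/((m:ℝ)+2))]
            rw [show (π/2 + (-(π/2) - (((2*s-1 : ℕ):ℝ)+1)*π/((m:ℝ)+2)) : ℝ)
                = 2*π*((((-(s:ℤ))):ℤ):ℝ)/((m:ℝ)+2) by rw [hℓcast]; push_cast; ring]
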